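/- Fix α ∈ (0,1/2) and ε ∈ (0,α), and suppose real random variables U and V satisfy d_L(L(U), L(V)) ≤ ε, where d_L is the Lévy metric. Then their (1−α)-quantiles satisfy |F_U^{-1}(1−α) − F_V^{-1}(1−α)| ≤ F_U^{-1}(1−α+ε) − F_U^{-1}(1−α−ε) + ε. -/

import Mathlib

open MeasureTheory ProbabilityTheory

/-- The c.d.f. of a random variable. -/
noncomputable def rvCdf {Ω : Type*} [MeasureSpace Ω] (X : Ω → ℝ) (x : ℝ) : ℝ :=
  (ℙ {ω | X ω ≤ x}).toReal

/-- The generalized inverse (quantile function) `F_X^{-1}(β) = inf{z : F_X(z) ≥ β}`. -/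
noncomputable def rvQuantile {Ω : Type*} [MeasureSpace Ω] (X : Ω → ℝ) (β : ℝ) : ℝ :=
  sInf {z : ℝ | β ≤ rvCdf X z}

lemma rvCdf_mono {Ω : Type*} [MeasureSpace Ω] [IsProbabilityMeasure (ℙ : Measure Ω)]
    (X : Ω → ℝ) : Monotone (rvCdf X) := fun a b hab =>
  ENNReal.toReal_mono (measure_ne_top _ _) (measure_mono fun ω h => le_trans h hab)

lemma rvCdf_eq_cdf {Ω : Type*} [MeasureSpace Ω] [IsProbabilityMeasure (ℙ : Measure Ω)]
    (X : Ω → ℝ) (hX : Measurable X) (x : ℝ) :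
    rvCdf X x = ProbabilityTheory.cdf (Measure.map X ℙ) x := by
  haveI : IsProbabilityMeasure (Measure.map X ℙ) := Measure.isProbabilityMeasure_map hX.aemeasurable
  rw [cdf_eq_real, measureReal_def, Measure.map_apply hX measurableSet_Iic]
  rfl

lemma exists_cdf_ge {Ω : Type*} [MeasureSpace Ω] [IsProbabilityMeasure (ℙ : Measure Ω)]
    (X : Ω → ℝ) (hX : Measurable X) {β : ℝ} (hβ : β < 1) :
    ∃ z : ℝ, β ≤ rvCdf X z := by
  have h := tendsto_cdf_atTop (Measure.map X ℙ)
  obtain ⟨z, hz⟩ := (h.eventually (eventually_ge_nhds hβ)).exists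
  exact ⟨z, by rwa [rvCdf_eq_cdf X hX]⟩

lemma cdf_set_nonempty {Ω : Type*} [MeasureSpace Ω] [IsProbabilityMeasure (ℙ : Measure Ω)]
    (X : Ω → ℝ) (hX : Measurable X) {β : ℝ} (hβ : β < 1) :
    Set.Nonempty {z : ℝ | β ≤ rvCdf X z} := exists_cdf_ge X hX hβ

lemma cdf_set_bddBelow {Ω : Type*} [MeasureSpace Ω] [IsProbabilityMeasure (ℙ : Measure Ω)]
    (X : Ω → ℝ) (hX : Measurable X) {β : ℝ} (hβ : 0 < β) :
    BddBelow {z : ℝ | β ≤ rvCdf X z} := by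
  have h := tendsto_cdf_atBot (Measure.map X ℙ)
  obtain ⟨b, hb⟩ := (h.eventually (eventually_lt_nhds hβ)).exists
  refine ⟨b, fun z hz => ?_⟩
  by_contra hzb
  push_neg at hzb
  have : rvCdf X z ≤ rvCdf X b := rvCdf_mono X hzb.le
  rw [rvCdf_eq_cdf X hX b] at this
  exact absurd (hz.trans this) (not_le.mpr hb)

/-- If the Lévy distance between `L(U)` and `L(V)` is at most `ε` (i.e. the ε-sandwich
`F_U(x−ε)−ε ≤ F_V(x) ≤ F_U(x+ε)+ε` holds for all `x`), with `0 < ε < α < 1/2`, then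
`|F_U^{-1}(1−α) − F_V^{-1}(1−α)| ≤ F_U^{-1}(1−α+ε) − F_U^{-1}(1−α−ε) + ε`. -/
theorem quantile_levy_bound {Ω : Type*} [MeasureSpace Ω]
    [IsProbabilityMeasure (ℙ : Measure Ω)]
    (U V : Ω → ℝ) (hU : Measurable U) (hV : Measurable V)
    (α ε : ℝ) (hα : α ∈ Set.Ioo (0 : ℝ) (1 / 2)) (hε : ε ∈ Set.Ioo 0 α)
    (hLevy : ∀ x : ℝ, rvCdf U (x - ε) - ε ≤ rvCdf V x ∧ rvCdf V x ≤ rvCdf U (x + ε) + ε) :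
    |rvQuantile U (1 - α) - rvQuantile V (1 - α)|
      ≤ rvQuantile U (1 - α + ε) - rvQuantile U (1 - α - ε) + ε := by
  obtain ⟨hα0, hα2⟩ := hα
  obtain ⟨hε0, hεα⟩ := hε
  set β := 1 - α with hβdef
  have hβ0 : 0 < β - ε := by simp only [hβdef]; linarith
  have hβ1 : β + ε < 1 := by simp only [hβdef]; linarith
  -- (a) q_V(β) ≤ q_U(β+ε) + ε
  have ha : rvQuantile V β ≤ rvQuantile U (β + ε) + ε := by
    have hS : Set.Nonempty {z : ℝ | β + ε ≤ rvCdf U z} := cdf_set_nonempty U hU hβ1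
    have hT : BddBelow {z : ℝ | β ≤ rvCdf V z} := cdf_set_bddBelow V hV (by linarith)
    have key : ∀ z ∈ {z : ℝ | β + ε ≤ rvCdf U z}, rvQuantile V β - ε ≤ z := by
      intro z hz
      have hmem : z + ε ∈ {z : ℝ | β ≤ rvCdf V z} := by
        have := (hLevy (z + ε)).1
        simp only [Set.mem_setOf_eq] at hz ⊢
        have h2 : rvCdf U (z + ε - ε) = rvCdf U z := by ring_nf
        linarith [this, h2.symm ▸ this]
      have := csInf_le hT hmem
      simp only [rvQuantile]; linarith
    have := le_csInf hS key
    simp only [rvQuantile] at this ⊢; linarith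
  -- (b) q_U(β-ε) ≤ q_V(β) + ε
  have hb : rvQuantile U (β - ε) ≤ rvQuantile V β + ε := by
    have hS : Set.Nonempty {z : ℝ | β ≤ rvCdf V z} := cdf_set_nonempty V hV (by linarith)
    have hT : BddBelow {z : ℝ | β - ε ≤ rvCdf U z} := cdf_set_bddBelow U hU hβ0
    have key : ∀ z ∈ {z : ℝ | β ≤ rvCdf V z}, rvQuantile U (β - ε) - ε ≤ z := by
      intro z hz
      have hmem : z + ε ∈ {z : ℝ | β - ε ≤ rvCdf U z} := by
        have := (hLevy z).2
        simp only [Set.mem_setOf_eq] at hz ⊢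
        linarith
      have := csInf_le hT hmem
      simp only [rvQuantile]; linarith
    have := le_csInf hS key
    simp only [rvQuantile] at this ⊢; linarith
  -- monotonicity of quantiles of U
  have hmono1 : rvQuantile U (β - ε) ≤ rvQuantile U β := by
    apply csInf_le_csInf (cdf_set_bddBelow U hU hβ0) (cdf_set_nonempty U hU (by linarith))
    intro z hz; simp only [Set.mem_setOf_eq] at hz ⊢; linarith
  have hmono2 : rvQuantile U β ≤ rvQuantile U (β + ε) := by
    apply csInf_le_csInf (cdf_set_bddBelow U hU (by linarith)) (cdf_set_nonempty U hU hβ1)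
    intro z hz; simp only [Set.mem_setOf_eq] at hz ⊢; linarith
  have h1 : 1 - α + ε = β + ε := by rw [hβdef]
  have h2 : 1 - α - ε = β - ε := by rw [hβdef]
  rw [h1, h2, abs_le]
  constructor <;> linarith
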